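/- Every maximal proper subgroup M of the alternating group A₅ has index [A₅ : M] equal to 5, 6, or 10. -/

import Mathlib

open Subgroup

private lemma A5card : Nat.card (alternatingGroup (Fin 5)) = 60 := by
  have h := two_mul_card_alternatingGroup (α := Fin 5)
  rw [Fintype.card_perm, Fintype.card_fin, show Nat.factorial 5 = 120 from rfl] at h
  rw [Nat.card_eq_fintype_card]
  omega

private lemma A5top : Nat.card (⊤ : Subgroup (alternatingGroup (Fin 5))) = 60 := by
  rw [← A5card]; exact Nat.card_congr Subgroup.topEquiv.toEquiv

/-- A proper subgroup of `A₅` has index at least `5`. -/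
private lemma A5index_ge (M : Subgroup (alternatingGroup (Fin 5))) (hne : M ≠ ⊤) :
    5 ≤ M.index := by
  classical
  by_contra h
  push_neg at h
  have hcore : M.normalCore = ⊥ := by
    rcases (IsSimpleGroup.eq_bot_or_eq_top_of_normal M.normalCore inferInstance) with h0 | h0
    · exact h0
    · exact absurd (top_le_iff.mp (h0 ▸ M.normalCore_le)) hne
  rw [normalCore_eq_ker] at hcore
  have hinj : Function.Injective (MulAction.toPermHom (alternatingGroup (Fin 5))
      (alternatingGroup (Fin 5) ⧸ M)) := (MonoidHom.ker_eq_bot_iff _).mp hcore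
  haveI := Fintype.ofFinite (alternatingGroup (Fin 5) ⧸ M)
  have hle := Nat.card_le_card_of_injective _ hinj
  rw [A5card, Nat.card_eq_fintype_card, Fintype.card_perm, ← Nat.card_eq_fintype_card] at hle
  have hidx : Nat.card (alternatingGroup (Fin 5) ⧸ M) = M.index := rfl
  rw [hidx] at hle
  have h24 : Nat.factorial M.index ≤ Nat.factorial 4 := Nat.factorial_le (by omega)
  have h4 : Nat.factorial 4 = 24 := rfl
  omega

/-- the normalizer of a nontrivial maximal subgroup of A₅ is itself -/
private lemma norm_self (M : Subgroup (alternatingGroup (Fin 5))) (hM : IsCoatom M)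
    (hnb : M ≠ ⊥) : normalizer (M : Set (alternatingGroup (Fin 5))) = M := by
  by_contra h
  have hlt : M < normalizer (M : Set (alternatingGroup (Fin 5))) := lt_of_le_of_ne le_normalizer (Ne.symm h)
  have htop := hM.2 _ hlt
  have hnormal : M.Normal := normalizer_eq_top_iff.mp htop
  rcases IsSimpleGroup.eq_bot_or_eq_top_of_normal M hnormal with h0 | h0
  · exact hnb h0
  · exact hM.1 h0

/-- Every maximal proper subgroup `M` of the alternating group `A₅` has index
`5`, `6`, or `10`. -/
theorem stmt_9 (M : Subgroup (alternatingGroup (Fin 5))) (hM : IsCoatom M) :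
    M.index = 5 ∨ M.index = 6 ∨ M.index = 10 := by
  have hdvd : M.index ∣ 60 := A5card ▸ M.index_dvd_card
  have hmul : Nat.card M * M.index = 60 := A5card ▸ M.card_mul_index
  have hge : 5 ≤ M.index := A5index_ge M hM.1
  have hcases : M.index ≤ 4 ∨ M.index = 5 ∨ M.index = 6 ∨ M.index = 10 ∨ M.index = 12 ∨
      M.index = 15 ∨ M.index = 20 ∨ M.index = 30 ∨ M.index = 60 := by
    have hle : M.index ≤ 60 := Nat.le_of_dvd (by norm_num) hdvd
    interval_cases h : M.index <;> revert hdvd <;> decide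
  haveI : Fact (Nat.Prime 2) := ⟨by norm_num⟩
  haveI : Fact (Nat.Prime 3) := ⟨by norm_num⟩
  haveI : Fact (Nat.Prime 5) := ⟨by norm_num⟩
  rcases hcases with h | h | h | h | h | h | h | h | h
  · omega
  · exact Or.inl h
  · exact Or.inr (Or.inl h)
  · exact Or.inr (Or.inr h)
  -- index 12 : M is a Sylow 5-subgroup, self-normalizing, 12 ≢ 1 mod 5
  · exfalso
    rw [h] at hmul
    have hc : Nat.card M = 5 := by omega
    have hpg : IsPGroup 5 M := IsPGroup.of_card (n := 1) (by simpa using hc)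
    have hnd : ¬ (5 : ℕ) ∣ M.index := by rw [h]; decide
    let P : Sylow 5 (alternatingGroup (Fin 5)) := hpg.toSylow hnd
    have hPM : (P : Subgroup (alternatingGroup (Fin 5))) = M := rfl
    have hb : M ≠ ⊥ := by
      intro hbot; rw [hbot] at hc; simp at hc
    have hns := norm_self M hM hb
    have hcount := card_sylow_modEq_one 5 (alternatingGroup (Fin 5))
    rw [Sylow.card_eq_index_normalizer P, show (P : Set (alternatingGroup (Fin 5))) = (M : Set (alternatingGroup (Fin 5))) from rfl, hns, h] at hcount
    exact absurd hcount (by decide)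
  -- index 15 : M is a Sylow 2-subgroup of order 4; Burnside transfer
  · exfalso
    rw [h] at hmul
    have hc : Nat.card M = 4 := by omega
    have hpg : IsPGroup 2 M := IsPGroup.of_card (n := 2) (by simpa using hc)
    have hnd : ¬ (2 : ℕ) ∣ M.index := by rw [h]; decide
    let P : Sylow 2 (alternatingGroup (Fin 5)) := hpg.toSylow hnd
    have hPM : (P : Subgroup (alternatingGroup (Fin 5))) = M := rfl
    have hb : M ≠ ⊥ := by
      intro hbot; rw [hbot] at hc; simp at hc
    have hns := norm_self M hM hb
    haveI : IsMulCommutative M :=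
      ⟨⟨fun a b => Subtype.ext (congrArg Subtype.val
        (IsPGroup.commutative_of_card_eq_prime_sq (p := 2) (by simpa using hc) a b))⟩⟩
    have hP : normalizer (P : Set (alternatingGroup (Fin 5))) ≤
        Subgroup.centralizer (P : Set (alternatingGroup (Fin 5))) := by
      rw [show (P : Set (alternatingGroup (Fin 5))) = (M : Set (alternatingGroup (Fin 5))) from rfl, hns]
      exact Subgroup.le_centralizer M
    have hcomp := MonoidHom.ker_transferSylow_isComplement' P hP
    have hker := hcomp.card_mul
    have h4 : Nat.card (P : Subgroup (alternatingGroup (Fin 5))) = 4 := by rw [hPM]; exact hc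
    rw [h4, A5card] at hker
    have hk15 : Nat.card (MonoidHom.transferSylow P hP).ker = 15 := by omega
    rcases IsSimpleGroup.eq_bot_or_eq_top_of_normal (MonoidHom.transferSylow P hP).ker
        inferInstance with h0 | h0
    · rw [h0] at hk15; simp at hk15
    · rw [h0, A5top] at hk15; omega
  -- index 20 : M is a Sylow 3-subgroup, self-normalizing, 20 ≢ 1 mod 3
  · exfalso
    rw [h] at hmul
    have hc : Nat.card M = 3 := by omega
    have hpg : IsPGroup 3 M := IsPGroup.of_card (n := 1) (by simpa using hc)
    have hnd : ¬ (3 : ℕ) ∣ M.index := by rw [h]; decide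
    let P : Sylow 3 (alternatingGroup (Fin 5)) := hpg.toSylow hnd
    have hPM : (P : Subgroup (alternatingGroup (Fin 5))) = M := rfl
    have hb : M ≠ ⊥ := by
      intro hbot; rw [hbot] at hc; simp at hc
    have hns := norm_self M hM hb
    have hcount := card_sylow_modEq_one 3 (alternatingGroup (Fin 5))
    rw [Sylow.card_eq_index_normalizer P, show (P : Set (alternatingGroup (Fin 5))) = (M : Set (alternatingGroup (Fin 5))) from rfl, hns, h] at hcount
    exact absurd hcount (by decide)
  -- index 30 or 60 : M is a 2-group of order ≤ 2, contained in a Sylow 2-subgroup of order 4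
  all_goals {
    exfalso
    rw [h] at hmul
    have hc : Nat.card M = 2 ∨ Nat.card M = 1 := by omega
    have hpg : IsPGroup 2 M := by
      rcases hc with hc | hc
      · exact IsPGroup.of_card (n := 1) (by simpa using hc)
      · exact IsPGroup.of_card (n := 0) (by simpa using hc)
    obtain ⟨P, hle⟩ := hpg.exists_le_sylow
    obtain ⟨k, hk⟩ := IsPGroup.iff_card.mp P.isPGroup'
    have hPd : Nat.card (P : Subgroup (alternatingGroup (Fin 5))) ∣ 60 :=
      A5card ▸ Subgroup.card_subgroup_dvd_card _
    have hk2 : k ≤ 2 := by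
      by_contra hk3
      push_neg at hk3
      have hd : (2 : ℕ) ^ 3 ∣ 2 ^ k := pow_dvd_pow 2 hk3
      rw [← hk] at hd
      have h8 : (8 : ℕ) ∣ 60 := dvd_trans (by norm_num : (8:ℕ) ∣ 2 ^ 3) (hd.trans hPd)
      norm_num at h8
    have hcP : Nat.card (P : Subgroup (alternatingGroup (Fin 5))) ≤ 4 := by
      rw [hk]
      calc (2:ℕ) ^ k ≤ 2 ^ 2 := Nat.pow_le_pow_right (by norm_num) hk2
        _ = 4 := by norm_num
    have hMP : M < (P : Subgroup (alternatingGroup (Fin 5))) := by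
      rcases lt_or_eq_of_le hle with hlt | heq
      · exact hlt
      · exfalso
        have hnd := P.not_dvd_index
        have hmulP : Nat.card (P : Subgroup (alternatingGroup (Fin 5))) *
            (P : Subgroup (alternatingGroup (Fin 5))).index = 60 :=
          A5card ▸ (P : Subgroup (alternatingGroup (Fin 5))).card_mul_index
        rw [← heq] at hmulP hnd
        apply hnd
        rcases hc with hc | hc <;> rw [hc] at hmulP <;> omega
    have htop := hM.2 _ hMP
    rw [htop, A5top] at hcP
    omega
  }
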